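/- Let X be a nonempty, simply connected, locally path-connected, locally compact Hausdorff space and Γ a subgroup of Homeomorph(X) acting freely and properly discontinuously, with quotient map κ : X → X/Γ. Then for any x₀ ∈ X the fundamental group of the orbit space X/Γ at the point κ(x₀) is isomorphic to the group Γ. -/

import Mathlib

namespace Homeomorph

variable {X : Type*} [TopologicalSpace X]

instance instGroup' : Group (X ≃ₜ X) where
  mul f g := g.trans f
  one := Homeomorph.refl X
  inv := Homeomorph.symm
  mul_assoc _ _ _ := rfl
  one_mul f := ext fun _ => rfl
  mul_one f := ext fun _ => rfl
  inv_mul_cancel f := self_trans_symm f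

@[simp] theorem mul_apply' (f g : X ≃ₜ X) (x : X) : (f * g) x = f (g x) := rfl

@[simp] theorem one_apply' (x : X) : (1 : X ≃ₜ X) x = x := rfl

@[simp] theorem inv_def' (f : X ≃ₜ X) : f⁻¹ = f.symm := rfl

/-- The orbit equivalence relation of a subgroup of the homeomorphism group of `X`;
its quotient is the orbit space `X/Γ`, endowed with the quotient topology. -/
def orbitSetoid (Γ : Subgroup (X ≃ₜ X)) : Setoid X where
  r x y := ∃ γ ∈ Γ, γ x = y
  iseqv := by
    refine ⟨fun x => ⟨1, Γ.one_mem, rfl⟩, ?_, ?_⟩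
    · rintro x y ⟨γ, hγ, rfl⟩
      exact ⟨γ⁻¹, Γ.inv_mem hγ, γ.symm_apply_apply x⟩
    · rintro x y z ⟨γ, hγ, rfl⟩ ⟨δ, hδ, rfl⟩
      exact ⟨δ * γ, Γ.mul_mem hδ hγ, rfl⟩

end Homeomorph


namespace OrbitCover

open Homeomorph Set

variable {X : Type*} [TopologicalSpace X] (Γ : Subgroup (X ≃ₜ X))

/-- Quotient map notation. -/
abbrev κ : X → Quotient (orbitSetoid Γ) := Quotient.mk (orbitSetoid Γ)

variable {Γ}

theorem kappa_eq_iff {x y : X} : κ Γ x = κ Γ y ↔ ∃ γ ∈ Γ, γ x = y :=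
  ⟨Quotient.exact, fun h => Quotient.sound h⟩

theorem kappa_apply_mem (γ : X ≃ₜ X) (hγ : γ ∈ Γ) (x : X) : κ Γ (γ x) = κ Γ x :=
  (kappa_eq_iff).2 ⟨γ⁻¹, Γ.inv_mem hγ, γ.symm_apply_apply x⟩

theorem kappa_continuous : Continuous (κ Γ) := continuous_quot_mk

theorem kappa_preimage_image (U : Set X) :
    κ Γ ⁻¹' (κ Γ '' U) = ⋃ γ : Γ, (γ : X ≃ₜ X) '' U := by
  ext y
  simp only [mem_preimage, mem_image, mem_iUnion]
  constructor
  · rintro ⟨u, hu, huy⟩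
    obtain ⟨γ, hγ, rfl⟩ := kappa_eq_iff.1 huy
    exact ⟨⟨γ, hγ⟩, u, hu, rfl⟩
  · rintro ⟨⟨γ, hγ⟩, u, hu, rfl⟩
    exact ⟨u, hu, (kappa_apply_mem γ hγ u).symm⟩

theorem kappa_isOpenMap : IsOpenMap (κ Γ) := by
  intro U hU
  have h : IsOpen (κ Γ ⁻¹' (κ Γ '' U)) := by
    rw [kappa_preimage_image]
    exact isOpen_iUnion fun γ => (γ : X ≃ₜ X).isOpenMap U hU
  exact isQuotientMap_quot_mk.isOpen_preimage.mp h

/-- A good open set: one whose `Γ`-translates are pairwise disjoint. -/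
def IsGood (Γ : Subgroup (X ≃ₜ X)) (U : Set X) : Prop :=
  IsOpen U ∧ ∀ γ ∈ Γ, γ ≠ 1 → ∀ x ∈ U, γ x ∉ U

theorem IsGood.injOn {U : Set X} (hU : IsGood Γ U) : Set.InjOn (κ Γ) U := by
  intro a ha b hb hab
  obtain ⟨γ, hγ, rfl⟩ := kappa_eq_iff.1 hab
  by_cases h1 : γ = 1
  · rw [h1]; rfl
  · exact absurd hb (hU.2 γ hγ h1 a ha)

theorem exists_good [LocallyCompactSpace X] [T2Space X]
    (hfree : ∀ γ ∈ Γ, ∀ x : X, γ x = x → γ = 1)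
    (hpd : ∀ K L : Set X, IsCompact K → IsCompact L →
      {γ : X ≃ₜ X | γ ∈ Γ ∧ ((⇑γ '' K) ∩ L).Nonempty}.Finite)
    (x : X) : ∃ U : Set X, IsGood Γ U ∧ x ∈ U := by
  obtain ⟨K, hKcomp, hKmem⟩ := exists_compact_mem_nhds x
  set F : Set (X ≃ₜ X) := {γ : X ≃ₜ X | γ ∈ Γ ∧ ((⇑γ '' K) ∩ K).Nonempty} with hF
  have hFfin : F.Finite := hpd K K hKcomp hKcomp
  have hsep : ∀ γ : X ≃ₜ X, ∃ V : Set X,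
      IsOpen V ∧ x ∈ V ∧ (γ ∈ Γ → γ ≠ 1 → ∀ y ∈ V, γ y ∉ V) := by
    intro γ
    by_cases hcond : γ ∈ Γ ∧ γ ≠ 1
    · have hne : γ x ≠ x := fun h => hcond.2 (hfree γ hcond.1 x h)
      obtain ⟨A, B, hA, hB, hxA, hxB, hAB⟩ := t2_separation hne
      refine ⟨B ∩ ⇑γ ⁻¹' A, hB.inter (hA.preimage γ.continuous), ⟨hxB, hxA⟩, ?_⟩
      rintro - - y ⟨-, hyA⟩ ⟨hyB, -⟩
      exact hAB.le_bot ⟨hyA, hyB⟩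
    · exact ⟨univ, isOpen_univ, mem_univ x, fun h1 h2 => absurd ⟨h1, h2⟩ hcond⟩
  choose V hVopen hVx hV using hsep
  refine ⟨interior K ∩ ⋂ γ ∈ F, V γ, ⟨?_, ?_⟩, ?_, ?_⟩
  · exact isOpen_interior.inter (hFfin.isOpen_biInter fun γ _ => hVopen γ)
  · rintro γ hγ h1 y ⟨hyK, hyV⟩ ⟨hgyK, hgyV⟩
    by_cases hγF : γ ∈ F
    · simp only [mem_iInter] at hyV hgyV
      exact hV γ hγ h1 y (hyV γ hγF) (hgyV γ hγF)
    · exact hγF ⟨hγ, ⟨γ y, ⟨y, interior_subset hyK, rfl⟩, interior_subset hgyK⟩⟩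
  · exact mem_interior_iff_mem_nhds.2 hKmem
  · exact mem_iInter₂.2 fun γ _ => hVx γ

theorem IsGood.exists_section {U : Set X} (hU : IsGood Γ U) {a : X}
    (ha : κ Γ a ∈ κ Γ '' U) :
    ∃ (s : Quotient (orbitSetoid Γ) → X) (W : Set X),
      ContinuousOn s (κ Γ '' U) ∧ (∀ q ∈ κ Γ '' U, κ Γ (s q) = q) ∧
      IsOpen W ∧ a ∈ W ∧ ∀ y ∈ W, s (κ Γ y) = y := by
  classical
  -- the basic section of `κ` over `κ '' U` with values in `U`
  set σ : Quotient (orbitSetoid Γ) → X :=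
    fun q => if h : q ∈ κ Γ '' U then h.choose else a with hσ
  have hσU : ∀ q ∈ κ Γ '' U, σ q ∈ U := by
    intro q hq; simp only [hσ, dif_pos hq]; exact hq.choose_spec.1
  have hσκ : ∀ q ∈ κ Γ '' U, κ Γ (σ q) = q := by
    intro q hq; simp only [hσ, dif_pos hq]; exact hq.choose_spec.2
  have hσuniq : ∀ q ∈ κ Γ '' U, ∀ u ∈ U, κ Γ u = q → σ q = u := by
    intro q hq u hu huq
    exact hU.injOn (hσU q hq) hu (by rw [hσκ q hq, huq])
  have hσcont : ContinuousOn σ (κ Γ '' U) := by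
    intro q hq
    intro N hN
    obtain ⟨W, hWN, hWopen, hWmem⟩ := mem_nhds_iff.1 hN
    have hqmem : q ∈ κ Γ '' (W ∩ U) :=
      ⟨σ q, ⟨hWmem, hσU q hq⟩, hσκ q hq⟩
    refine Filter.mem_map.2 ?_
    refine mem_nhdsWithin.2 ⟨κ Γ '' (W ∩ U), kappa_isOpenMap _ (hWopen.inter hU.1),
      hqmem, ?_⟩
    rintro q' ⟨⟨w, ⟨hwW, hwU⟩, rfl⟩, hq'U⟩
    have : σ (κ Γ w) = w := hσuniq _ hq'U w hwU rfl
    exact hWN (by rw [this]; exact hwW)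
  -- translate by the group element carrying the chosen preimage to `a`
  obtain ⟨u, huU, hua⟩ := ha
  obtain ⟨γ, hγ, hγu⟩ := kappa_eq_iff.1 hua
  refine ⟨fun q => γ (σ q), ⇑γ '' U, γ.continuous.comp_continuousOn hσcont, ?_, ?_, ?_, ?_⟩
  · intro q hq; rw [kappa_apply_mem γ hγ, hσκ q hq]
  · exact γ.isOpenMap U hU.1
  · exact ⟨u, huU, hγu⟩
  · rintro y ⟨w, hwU, rfl⟩
    have h1 : κ Γ (γ w) = κ Γ w := kappa_apply_mem γ hγ w
    have h2 : κ Γ w ∈ κ Γ '' U := ⟨w, hwU, rfl⟩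
    show γ (σ (κ Γ (γ w))) = γ w
    rw [h1, hσuniq _ h2 w hwU rfl]

/-- A function on an interval that is locally constant is constant. -/
theorem eq_left_of_locally_eq {α : Type*} {a b : ℝ} (E : ℝ → α)
    (h : ∀ s ∈ Icc a b, ∃ ε > 0, ∀ s' ∈ Icc a b, |s' - s| < ε → E s' = E s) :
    ∀ s ∈ Icc a b, E s = E a := by
  intro s hs
  have hab : a ≤ b := le_trans hs.1 hs.2
  haveI : PreconnectedSpace (Icc a b) := Subtype.preconnectedSpace isPreconnected_Icc
  set A : Set (Icc a b) := {t | E ↑t = E a} with hA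
  have hopen : IsOpen A := by
    rw [Metric.isOpen_iff]
    rintro ⟨t, ht⟩ htA
    obtain ⟨ε, hε, hloc⟩ := h t ht
    refine ⟨ε, hε, ?_⟩
    rintro ⟨t', ht'⟩ hd
    rw [Metric.mem_ball, Subtype.dist_eq, Real.dist_eq] at hd
    show E t' = E a
    rw [hloc t' ht' hd]; exact htA
  have hclosed : IsClosed A := by
    rw [← isOpen_compl_iff, Metric.isOpen_iff]
    rintro ⟨t, ht⟩ htA
    obtain ⟨ε, hε, hloc⟩ := h t ht
    refine ⟨ε, hε, ?_⟩
    rintro ⟨t', ht'⟩ hd htA'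
    rw [Metric.mem_ball, Subtype.dist_eq, Real.dist_eq] at hd
    exact htA (show E t = E a by rw [← hloc t' ht' hd]; exact htA')
  have huniv : A = Set.univ :=
    IsClopen.eq_univ ⟨hclosed, hopen⟩ ⟨⟨a, left_mem_Icc.2 hab⟩, (rfl : E a = E a)⟩
  have : (⟨s, hs⟩ : Icc a b) ∈ A := huniv ▸ Set.mem_univ _
  exact this

variable [LocallyCompactSpace X] [T2Space X]
variable (hfree : ∀ γ ∈ Γ, ∀ x : X, γ x = x → γ = 1)
variable (hpd : ∀ K L : Set X, IsCompact K → IsCompact L →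
      {γ : X ≃ₜ X | γ ∈ Γ ∧ ((⇑γ '' K) ∩ L).Nonempty}.Finite)

include hfree hpd

/-- Uniqueness of lifts along `κ`. -/
theorem lift_unique {g₁ g₂ : ℝ → X} (h₁ : Continuous g₁) (h₂ : Continuous g₂)
    {a b : ℝ} (hκ : ∀ t ∈ Icc a b, κ Γ (g₁ t) = κ Γ (g₂ t)) (hstart : g₁ a = g₂ a) :
    ∀ t ∈ Icc a b, g₁ t = g₂ t := by
  classical
  set E : ℝ → ℕ := fun t => if g₁ t = g₂ t then 0 else 1 with hE
  have key : ∀ t ∈ Icc a b, E t = E a := by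
    refine eq_left_of_locally_eq E ?_
    intro t ht
    by_cases heq : g₁ t = g₂ t
    · obtain ⟨U, hU, hyU⟩ := exists_good hfree hpd (g₁ t)
      have hO : IsOpen (g₁ ⁻¹' U ∩ g₂ ⁻¹' U) :=
        (hU.1.preimage h₁).inter (hU.1.preimage h₂)
      obtain ⟨ε, hε, hball⟩ := Metric.isOpen_iff.1 hO t ⟨hyU, show g₂ t ∈ U by rw [← heq]; exact hyU⟩
      refine ⟨ε, hε, fun s' hs' hd => ?_⟩
      have hmem : s' ∈ g₁ ⁻¹' U ∩ g₂ ⁻¹' U :=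
        hball (by rw [Metric.mem_ball, Real.dist_eq]; exact hd)
      have : g₁ s' = g₂ s' := hU.injOn hmem.1 hmem.2 (hκ s' hs')
      simp only [hE, if_pos this, if_pos heq]
    · obtain ⟨γ, hγ, hγt⟩ := kappa_eq_iff.1 (hκ t ht)
      have hγ1 : γ ≠ 1 := by rintro rfl; exact heq hγt
      obtain ⟨U, hU, hyU⟩ := exists_good hfree hpd (g₁ t)
      have hO : IsOpen (g₁ ⁻¹' U ∩ g₂ ⁻¹' (⇑γ '' U)) :=
        (hU.1.preimage h₁).inter ((γ.isOpenMap U hU.1).preimage h₂)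
      obtain ⟨ε, hε, hball⟩ := Metric.isOpen_iff.1 hO t ⟨hyU, ⟨g₁ t, hyU, hγt⟩⟩
      refine ⟨ε, hε, fun s' hs' hd => ?_⟩
      have hmem : s' ∈ g₁ ⁻¹' U ∩ g₂ ⁻¹' (⇑γ '' U) :=
        hball (by rw [Metric.mem_ball, Real.dist_eq]; exact hd)
      have hne : g₁ s' ≠ g₂ s' := by
        intro hcontra
        obtain ⟨u, huU, hu⟩ := hmem.2
        exact hU.2 γ hγ hγ1 u huU (by rw [hu, ← hcontra]; exact hmem.1)
      simp only [hE, if_neg hne, if_neg heq]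
  intro t ht
  have h0 : E a = 0 := by simp only [hE, if_pos hstart]
  have := key t ht
  rw [h0, hE] at this
  by_contra hne
  simp only [if_neg hne] at this
  exact one_ne_zero this

/-- Choice of a good set through every point of the quotient. -/
theorem exists_good_through (q : Quotient (orbitSetoid Γ)) :
    ∃ U : Set X, IsGood Γ U ∧ q ∈ κ Γ '' U := by
  obtain ⟨y, rfl⟩ := Quotient.exists_rep q
  obtain ⟨U, hU, hyU⟩ := exists_good hfree hpd y
  exact ⟨U, hU, y, hyU, rfl⟩

/-- Existence of lifts of paths along `κ`. -/
theorem lift_exists {p : ℝ → Quotient (orbitSetoid Γ)} (hp : Continuous p)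
    {x : X} (h0 : p 0 = κ Γ x) :
    ∃ g : ℝ → X, Continuous g ∧ g 0 = x ∧ ∀ t ∈ Icc (0:ℝ) 1, κ Γ (g t) = p t := by
  classical
  choose Ufun hUgood hUmem using exists_good_through (Γ := Γ) hfree hpd
  set c : Quotient (orbitSetoid Γ) → Set ℝ := fun q => p ⁻¹' (κ Γ '' Ufun q) with hc
  have hcopen : ∀ q, IsOpen (c q) := fun q =>
    (kappa_isOpenMap _ (hUgood q).1).preimage hp
  have hccover : Icc (0:ℝ) 1 ⊆ ⋃ q, c q := fun t _ =>
    mem_iUnion.2 ⟨p t, hUmem (p t)⟩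
  obtain ⟨δ, hδ, hleb⟩ := lebesgue_number_lemma_of_metric isCompact_Icc hcopen hccover
  obtain ⟨n, hn⟩ := exists_nat_one_div_lt hδ
  have hn0 : (0:ℝ) < (n:ℝ) + 1 := by positivity
  set N : ℝ := (n:ℝ) + 1 with hN
  -- each grid segment is mapped into a good set
  have hseg : ∀ k : ℕ, k < n + 1 → ∃ U : Set X, IsGood Γ U ∧
      ∀ t ∈ Icc ((k:ℝ)/N) (((k:ℝ)+1)/N), p t ∈ κ Γ '' U := by
    intro k hk
    have hkN : (k:ℝ)/N ∈ Icc (0:ℝ) 1 := by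
      constructor
      · positivity
      · rw [div_le_one hn0, hN]
        have hkn : (k:ℝ) ≤ (n:ℝ) := by exact_mod_cast Nat.le_of_lt_succ hk
        linarith
    obtain ⟨q, hq⟩ := hleb _ hkN
    refine ⟨Ufun q, hUgood q, fun t ht => ?_⟩
    have : t ∈ Metric.ball ((k:ℝ)/N) δ := by
      rw [Metric.mem_ball, Real.dist_eq, abs_sub_lt_iff]
      constructor
      · have : t ≤ ((k:ℝ)+1)/N := ht.2
        have h1N : 1/N < δ := by
          calc 1/N ≤ 1/((n:ℝ)+1) := by rw [hN]
          _ < δ := hn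
        nlinarith [ht.2, add_div (k:ℝ) 1 N]
      · linarith [ht.1, hδ]
    exact hq this
  -- inductive construction of partial lifts
  have main : ∀ k : ℕ, k ≤ n + 1 → ∃ g : ℝ → X, Continuous g ∧ g 0 = x ∧
      ∀ t ∈ Icc (0:ℝ) ((k:ℝ)/N), κ Γ (g t) = p t := by
    intro k
    induction k with
    | zero =>
      intro _
      refine ⟨fun _ => x, continuous_const, rfl, fun t ht => ?_⟩
      have : t = 0 := le_antisymm (by simpa using ht.2) ht.1
      rw [this, h0]
    | succ k ih =>
      intro hk1
      obtain ⟨g, hgcont, hg0, hglift⟩ := ih (by omega)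
      obtain ⟨U, hU, hUseg⟩ := hseg k (by omega)
      have hknonneg : (0:ℝ) ≤ (k:ℝ)/N := by positivity
      have hkk1 : (k:ℝ)/N ≤ ((k:ℝ)+1)/N := by
        rw [div_le_div_iff_of_pos_right hn0]
        linarith
      have hmemk : p ((k:ℝ)/N) ∈ κ Γ '' U :=
        hUseg _ ⟨le_refl _, hkk1⟩
      have hκa : κ Γ (g ((k:ℝ)/N)) ∈ κ Γ '' U := by
        rw [hglift _ ⟨hknonneg, le_refl _⟩]; exact hmemk
      obtain ⟨sec, W, hseccont, hsecκ, hWopen, haW, hsecW⟩ := hU.exists_section hκa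
      set clamp : ℝ → ℝ := fun t => max ((k:ℝ)/N) (min t (((k:ℝ)+1)/N)) with hclamp
      have hclampcont : Continuous clamp :=
        continuous_const.max (continuous_id.min continuous_const)
      have hclampmem : ∀ t, clamp t ∈ Icc ((k:ℝ)/N) (((k:ℝ)+1)/N) :=
        fun t => ⟨le_max_left _ _, max_le hkk1 (min_le_right _ _)⟩
      set g' : ℝ → X := fun t => if t ≤ (k:ℝ)/N then g t else sec (p (clamp t)) with hg'
      have hbr2 : Continuous fun t => sec (p (clamp t)) := by
        refine hseccont.comp_continuous (hp.comp hclampcont) fun t => ?_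
        exact hUseg _ (hclampmem t)
      have hjunction : ∀ t : ℝ, t = (k:ℝ)/N → g t = sec (p (clamp t)) := by
        intro t ht
        subst ht
        have : clamp ((k:ℝ)/N) = (k:ℝ)/N := by
          rw [hclamp]
          simp [min_eq_left hkk1]
        rw [this, ← hglift _ ⟨hknonneg, le_refl _⟩, hsecW _ haW]
      have hg'cont : Continuous g' := by
        refine Continuous.if_le hgcont hbr2 continuous_id continuous_const ?_
        exact hjunction
      refine ⟨g', hg'cont, ?_, ?_⟩
      · simp only [hg']; rw [if_pos hknonneg]; exact hg0
      · intro t ht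
        push_cast
        by_cases hcase : t ≤ (k:ℝ)/N
        · rw [hg']; simp only [if_pos hcase]
          exact hglift t ⟨ht.1, hcase⟩
        · rw [hg']; simp only [if_neg hcase]
          push_neg at hcase
          have hclampt : clamp t = t := by
            have hmin : t ≤ ((k:ℝ)+1)/N := by
              have := ht.2
              push_cast at this ⊢
              linarith
            show ((k:ℝ)/N) ⊔ (t ⊓ (((k:ℝ)+1)/N)) = t
            rw [min_eq_left hmin, max_eq_right hcase.le]
          rw [hclampt]
          refine hsecκ _ (hUseg t ⟨hcase.le, ?_⟩)
          have := ht.2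
          push_cast at this ⊢
          linarith
  obtain ⟨g, hgcont, hg0, hglift⟩ := main (n+1) (le_refl _)
  refine ⟨g, hgcont, hg0, fun t ht => hglift t ?_⟩
  have : ((n:ℝ)+1)/N = 1 := by rw [hN]; exact div_self (ne_of_gt hn0)
  push_cast
  rw [this]
  exact ht

/-- Monodromy: lifts of the two ends of a homotopy (with fixed endpoints) have
the same endpoint. -/
theorem monodromy (K : ℝ × ℝ → Quotient (orbitSetoid Γ)) (hK : Continuous K)
    (x x' : X) (hK0 : ∀ s, K (s, 0) = κ Γ x) (hK1 : ∀ s, K (s, 1) = κ Γ x')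
    (g₀ g₁ : ℝ → X) (hg₀ : Continuous g₀) (hg₁ : Continuous g₁)
    (hg₀0 : g₀ 0 = x) (hg₁0 : g₁ 0 = x)
    (hg₀lift : ∀ t ∈ Icc (0:ℝ) 1, κ Γ (g₀ t) = K (0, t))
    (hg₁lift : ∀ t ∈ Icc (0:ℝ) 1, κ Γ (g₁ t) = K (1, t)) :
    g₀ 1 = g₁ 1 := by
  classical
  -- a lift of each horizontal slice
  have hlift : ∀ s : ℝ, ∃ g : ℝ → X, Continuous g ∧ g 0 = x ∧
      ∀ t ∈ Icc (0:ℝ) 1, κ Γ (g t) = K (s, t) := by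
    intro s
    exact lift_exists hfree hpd (hK.comp (continuous_const.prodMk continuous_id)) (hK0 s)
  choose Gfun hGcont hG0 hGlift using hlift
  set E : ℝ → X := fun s => Gfun s 1 with hE
  -- local constancy of the endpoint map
  have hloc : ∀ s₀ ∈ Icc (0:ℝ) 1, ∃ ε > 0, ∀ s ∈ Icc (0:ℝ) 1, |s - s₀| < ε → E s = E s₀ := by
    intro s₀ hs₀
    choose Ufun hUgood hUmem using exists_good_through (Γ := Γ) hfree hpd
    set c : Quotient (orbitSetoid Γ) → Set (ℝ × ℝ) := fun q => K ⁻¹' (κ Γ '' Ufun q) with hc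
    have hcopen : ∀ q, IsOpen (c q) := fun q =>
      (kappa_isOpenMap _ (hUgood q).1).preimage hK
    have hScomp : IsCompact (({s₀} : Set ℝ) ×ˢ Icc (0:ℝ) 1) :=
      isCompact_singleton.prod isCompact_Icc
    have hccover : ({s₀} : Set ℝ) ×ˢ Icc (0:ℝ) 1 ⊆ ⋃ q, c q := fun z _ =>
      mem_iUnion.2 ⟨K z, hUmem (K z)⟩
    obtain ⟨δ, hδ, hleb⟩ := lebesgue_number_lemma_of_metric hScomp hcopen hccover
    obtain ⟨n, hn⟩ := exists_nat_one_div_lt hδ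
    have hn0 : (0:ℝ) < (n:ℝ) + 1 := by positivity
    set N : ℝ := (n:ℝ) + 1 with hN
    have h1N : 1/N < δ := hn
    have hseg : ∀ k : ℕ, k < n + 1 → ∃ U : Set X, IsGood Γ U ∧
        ∀ s t : ℝ, |s - s₀| < δ → t ∈ Icc ((k:ℝ)/N) (((k:ℝ)+1)/N) →
          K (s, t) ∈ κ Γ '' U := by
      intro k hk
      have hkN : ((k:ℝ)/N) ∈ Icc (0:ℝ) 1 := by
        constructor
        · positivity
        · rw [div_le_one hn0, hN]
          have hkn : (k:ℝ) ≤ (n:ℝ) := by exact_mod_cast Nat.le_of_lt_succ hk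
          linarith
      obtain ⟨q, hq⟩ := hleb (s₀, (k:ℝ)/N) ⟨rfl, hkN⟩
      refine ⟨Ufun q, hUgood q, fun s t hs ht => ?_⟩
      have hz : (s, t) ∈ Metric.ball (s₀, (k:ℝ)/N) δ := by
        rw [Metric.mem_ball, Prod.dist_eq, Real.dist_eq, Real.dist_eq]
        refine max_lt hs ?_
        rw [abs_sub_lt_iff]
        constructor
        · nlinarith [ht.2, add_div (k:ℝ) 1 N]
        · linarith [ht.1, hδ]
      exact hq hz
    -- inductive construction of a continuous lift of a small tube
    have main : ∀ k : ℕ, k ≤ n + 1 → ∃ ε : ℝ, 0 < ε ∧ ε ≤ δ/2 ∧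
        ∃ Gp : ℝ × ℝ → X, Continuous Gp ∧ (∀ s, Gp (s, 0) = x) ∧
          ∀ s ∈ Icc (s₀ - ε) (s₀ + ε), ∀ t ∈ Icc (0:ℝ) ((k:ℝ)/N),
            κ Γ (Gp (s, t)) = K (s, t) := by
      intro k
      induction k with
      | zero =>
        intro _
        refine ⟨δ/2, by linarith, le_refl _, fun _ => x, continuous_const,
          fun _ => rfl, fun s hs t ht => ?_⟩
        have : t = 0 := le_antisymm (by simpa using ht.2) ht.1
        rw [this, hK0 s]
      | succ k ih =>
        intro hk1
        obtain ⟨ε, hε, hεδ, Gp, hGpcont, hGp0, hGplift⟩ := ih (by omega)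
        obtain ⟨U, hU, hUseg⟩ := hseg k (by omega)
        have hknonneg : (0:ℝ) ≤ (k:ℝ)/N := by positivity
        have hkk1 : (k:ℝ)/N ≤ ((k:ℝ)+1)/N := by
          rw [div_le_div_iff_of_pos_right hn0]
          linarith
        have hs₀tube : s₀ ∈ Icc (s₀ - ε) (s₀ + ε) := by
          constructor <;> linarith
        have ha : κ Γ (Gp (s₀, (k:ℝ)/N)) = K (s₀, (k:ℝ)/N) :=
          hGplift s₀ hs₀tube _ ⟨hknonneg, le_refl _⟩
        have hκa : κ Γ (Gp (s₀, (k:ℝ)/N)) ∈ κ Γ '' U := by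
          rw [ha]
          exact hUseg s₀ _ (by simpa using hδ) ⟨le_refl _, hkk1⟩
        obtain ⟨sec, W, hseccont, hsecκ, hWopen, haW, hsecW⟩ := hU.exists_section hκa
        set m : ℝ → X := fun s => Gp (s, (k:ℝ)/N) with hm
        have hmcont : Continuous m :=
          hGpcont.comp (continuous_id.prodMk continuous_const)
        obtain ⟨ε₂, hε₂, hball⟩ :=
          Metric.isOpen_iff.1 (hWopen.preimage hmcont) s₀ haW
        set ε' : ℝ := min ε ε₂ / 2 with hε'
        have hε'pos : 0 < ε' := by
          have := lt_min hε hε₂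
          positivity
        have hε'ε : ε' < ε := by
          have : min ε ε₂ ≤ ε := min_le_left _ _
          linarith
        have hε'ε₂ : ε' < ε₂ := by
          have : min ε ε₂ ≤ ε₂ := min_le_right _ _
          linarith
        have hε'δ : ε' ≤ δ/2 := by linarith
        have habs : ∀ s ∈ Icc (s₀ - ε') (s₀ + ε'), |s - s₀| ≤ ε' := by
          intro s hs
          rw [abs_le]
          constructor <;> [linarith [hs.1]; linarith [hs.2]]
        have htube : ∀ s ∈ Icc (s₀ - ε') (s₀ + ε'),
            s ∈ Icc (s₀ - ε) (s₀ + ε) ∧ |s - s₀| < ε₂ ∧ |s - s₀| < δ := by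
          intro s hs
          have h1 := habs s hs
          refine ⟨⟨by linarith [hs.1], by linarith [hs.2]⟩, by linarith, by linarith⟩
        set clampS : ℝ → ℝ := fun s => max (s₀ - ε') (min s (s₀ + ε')) with hclampS
        have hclampScont : Continuous clampS :=
          continuous_const.max (continuous_id.min continuous_const)
        have hclampSmem : ∀ s, clampS s ∈ Icc (s₀ - ε') (s₀ + ε') := by
          intro s
          constructor
          · exact le_max_left _ _
          · exact max_le (by linarith) (min_le_right _ _)
        have hclampSid : ∀ s ∈ Icc (s₀ - ε') (s₀ + ε'), clampS s = s := by
          intro s hs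
          show max (s₀ - ε') (min s (s₀ + ε')) = s
          rw [min_eq_left hs.2, max_eq_right hs.1]
        set clampT : ℝ → ℝ := fun t => max ((k:ℝ)/N) (min t (((k:ℝ)+1)/N)) with hclampT
        have hclampTcont : Continuous clampT :=
          continuous_const.max (continuous_id.min continuous_const)
        have hclampTmem : ∀ t, clampT t ∈ Icc ((k:ℝ)/N) (((k:ℝ)+1)/N) :=
          fun t => ⟨le_max_left _ _, max_le hkk1 (min_le_right _ _)⟩
        have hKmem : ∀ s t : ℝ, K (clampS s, clampT t) ∈ κ Γ '' U := by
          intro s t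
          exact hUseg _ _ (htube _ (hclampSmem s)).2.2 (hclampTmem t)
        set Gp' : ℝ × ℝ → X := fun z =>
          if z.2 ≤ (k:ℝ)/N then Gp (clampS z.1, z.2)
          else sec (K (clampS z.1, clampT z.2)) with hGp'
        have hbr1 : Continuous fun z : ℝ × ℝ => Gp (clampS z.1, z.2) :=
          hGpcont.comp ((hclampScont.comp continuous_fst).prodMk continuous_snd)
        have hbr2 : Continuous fun z : ℝ × ℝ => sec (K (clampS z.1, clampT z.2)) := by
          refine hseccont.comp_continuous
            (hK.comp ((hclampScont.comp continuous_fst).prodMk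
              (hclampTcont.comp continuous_snd))) fun z => hKmem z.1 z.2
        have hjunction : ∀ z : ℝ × ℝ, z.2 = (k:ℝ)/N →
            Gp (clampS z.1, z.2) = sec (K (clampS z.1, clampT z.2)) := by
          rintro ⟨s, t⟩ ht
          dsimp only at ht ⊢
          subst ht
          have hct : clampT ((k:ℝ)/N) = (k:ℝ)/N := by
            show max ((k:ℝ)/N) (min ((k:ℝ)/N) (((k:ℝ)+1)/N)) = (k:ℝ)/N
            simp [min_eq_left hkk1]
          rw [hct]
          set s' := clampS s with hs'
          have hs'mem := hclampSmem s
          have hs'W : m s' ∈ W := hball (by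
            rw [Metric.mem_ball, Real.dist_eq]
            exact lt_of_le_of_lt (habs s' hs'mem) hε'ε₂)
          have hκm : κ Γ (m s') = K (s', (k:ℝ)/N) :=
            hGplift s' (htube s' hs'mem).1 _ ⟨hknonneg, le_refl _⟩
          rw [← hκm, hsecW _ hs'W]
        have hGp'cont : Continuous Gp' := by
          refine Continuous.if_le hbr1 hbr2 continuous_snd continuous_const hjunction
        refine ⟨ε', hε'pos, hε'δ, Gp', hGp'cont, ?_, ?_⟩
        · intro s
          show (if (0:ℝ) ≤ (k:ℝ)/N then Gp (clampS s, 0) else _) = x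
          rw [if_pos hknonneg]
          exact hGp0 _
        · intro s hs t ht
          have hcs : clampS s = s := hclampSid s hs
          by_cases hcase : t ≤ (k:ℝ)/N
          · show κ Γ (if t ≤ (k:ℝ)/N then Gp (clampS s, t) else _) = K (s, t)
            rw [if_pos hcase, hcs]
            exact hGplift s (htube s hs).1 t ⟨ht.1, hcase⟩
          · show κ Γ (if t ≤ (k:ℝ)/N then _ else sec (K (clampS s, clampT t))) = K (s, t)
            rw [if_neg hcase, hcs]
            push_neg at hcase
            have ht2 : t ≤ ((k:ℝ)+1)/N := by
              have := ht.2
              push_cast at this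
              linarith
            have hctt : clampT t = t := by
              show max ((k:ℝ)/N) (min t (((k:ℝ)+1)/N)) = t
              rw [min_eq_left ht2, max_eq_right hcase.le]
            rw [hctt]
            exact hsecκ _ (hUseg s t (htube s hs).2.2 ⟨hcase.le, ht2⟩)
    -- conclude local constancy from the tube lift
    obtain ⟨ε, hε, hεδ, Gp, hGpcont, hGp0, hGplift⟩ := main (n+1) (le_refl _)
    have hone : ((n+1:ℕ):ℝ)/N = 1 := by
      rw [hN]; push_cast; exact div_self (ne_of_gt hn0)
    have hGplift' : ∀ s ∈ Icc (s₀ - ε) (s₀ + ε), ∀ t ∈ Icc (0:ℝ) 1,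
        κ Γ (Gp (s, t)) = K (s, t) := by
      intro s hs t ht
      refine hGplift s hs t ?_
      rw [hone]
      exact ht
    -- the endpoint of the canonical lift agrees with the tube lift
    have hEeq : ∀ s ∈ Icc (s₀ - ε) (s₀ + ε), E s = Gp (s, 1) := by
      intro s hs
      have := lift_unique hfree hpd (g₁ := Gfun s) (g₂ := fun t => Gp (s, t)) (hGcont s)
        (by exact hGpcont.comp (continuous_const.prodMk continuous_id))
        (a := 0) (b := 1) (fun t ht => by
          show κ Γ (Gfun s t) = κ Γ (Gp (s, t))
          rw [hGlift s t ht, hGplift' s hs t ht])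
        (by show Gfun s 0 = Gp (s, 0); rw [hG0 s, hGp0 s])
      exact this 1 ⟨zero_le_one, le_refl _⟩
    -- the top edge of the tube lift is locally constant
    have htop : ∀ s ∈ Icc (s₀ - ε) (s₀ + ε), Gp (s, 1) = Gp (s₀ - ε, 1) := by
      refine eq_left_of_locally_eq (fun s => Gp (s, 1)) ?_
      intro s₁ hs₁
      obtain ⟨U₁, hU₁, hyU₁⟩ := exists_good hfree hpd (Gp (s₁, 1))
      have hκy : κ Γ (Gp (s₁, 1)) ∈ κ Γ '' U₁ := ⟨_, hyU₁, rfl⟩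
      obtain ⟨sec₁, W₁, _, _, hW₁open, haW₁, hsecW₁⟩ := hU₁.exists_section hκy
      have hcont1 : Continuous fun s => Gp (s, 1) :=
        hGpcont.comp (continuous_id.prodMk continuous_const)
      obtain ⟨ε₁, hε₁, hball₁⟩ :=
        Metric.isOpen_iff.1 (hW₁open.preimage hcont1) s₁ haW₁
      refine ⟨ε₁, hε₁, fun s hs hd => ?_⟩
      show Gp (s, 1) = Gp (s₁, 1)
      have h1 : Gp (s, 1) ∈ W₁ := hball₁ (by rw [Metric.mem_ball, Real.dist_eq]; exact hd)
      have hv : ∀ u ∈ Icc (s₀ - ε) (s₀ + ε), Gp (u, 1) ∈ W₁ → Gp (u, 1) = sec₁ (κ Γ x') := by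
        intro u hu huW
        rw [← hsecW₁ _ huW, hGplift' u hu 1 ⟨zero_le_one, le_refl _⟩, hK1 u]
      rw [hv s hs h1, hv s₁ hs₁ haW₁]
    refine ⟨ε, hε, ?_⟩
    intro s hs hd
    have hstube : s ∈ Icc (s₀ - ε) (s₀ + ε) := by
      rw [abs_sub_lt_iff] at hd
      constructor <;> [linarith [hd.2]; linarith [hd.1]]
    have hs₀tube : s₀ ∈ Icc (s₀ - ε) (s₀ + ε) := by constructor <;> linarith
    rw [hEeq s hstube, hEeq s₀ hs₀tube, htop s hstube, htop s₀ hs₀tube]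
    -- (ε provided)
  -- now conclude
  have hconst := eq_left_of_locally_eq E hloc
  have h01 : E 1 = E 0 := hconst 1 ⟨zero_le_one, le_refl _⟩
  have hg₀E : g₀ 1 = E 0 := by
    have := lift_unique hfree hpd hg₀ (hGcont 0) (a := 0) (b := 1)
      (fun t ht => by rw [hg₀lift t ht, hGlift 0 t ht]) (by rw [hg₀0, hG0 0])
    exact this 1 ⟨zero_le_one, le_refl _⟩
  have hg₁E : g₁ 1 = E 1 := by
    have := lift_unique hfree hpd hg₁ (hGcont 1) (a := 0) (b := 1)
      (fun t ht => by rw [hg₁lift t ht, hGlift 1 t ht]) (by rw [hg₁0, hG0 1])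
    exact this 1 ⟨zero_le_one, le_refl _⟩
  rw [hg₀E, hg₁E, h01]

attribute [local instance] Path.Homotopic.setoid

omit hfree hpd in
theorem homotopic_cast {Z : Type*} [TopologicalSpace Z] {x y x' y' : Z} {p q : Path x y}
    (h : p.Homotopic q) (hx : x' = x) (hy : y' = y) :
    (p.cast hx hy).Homotopic (q.cast hx hy) := by
  subst hx; subst hy
  rw [show p.cast rfl rfl = p from Path.ext rfl, show q.cast rfl rfl = q from Path.ext rfl]
  exact h

/-- The loop in the orbit space associated to a path from `x₀` to `γ x₀`. -/
def loopOf {x₀ : X} {γ : X ≃ₜ X} (hγ : γ ∈ Γ) (P : Path x₀ (γ x₀)) :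
    Path (κ Γ x₀) (κ Γ x₀) :=
  (P.map kappa_continuous).cast rfl (kappa_apply_mem γ hγ x₀).symm

omit hfree hpd in
theorem loopOf_apply {x₀ : X} {γ : X ≃ₜ X} (hγ : γ ∈ Γ) (P : Path x₀ (γ x₀))
    (t : unitInterval) : loopOf hγ P t = κ Γ (P t) := rfl

theorem main_aux [Nonempty X] [SimplyConnectedSpace X] (x₀ : X) :
    Nonempty (FundamentalGroup (Quotient (orbitSetoid Γ))
      (Quotient.mk (orbitSetoid Γ) x₀) ≃* Γ) := by
  classical
  -- the monodromy homomorphism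
  set ψ : Γ → Path.Homotopic.Quotient (κ Γ x₀) (κ Γ x₀) := fun γ =>
    ⟦loopOf γ.2 (PathConnectedSpace.somePath x₀ ((γ : X ≃ₜ X) x₀))⟧ with hψ
  have ψ_eq : ∀ (γ : Γ) (P : Path x₀ ((γ : X ≃ₜ X) x₀)), ψ γ = ⟦loopOf γ.2 P⟧ := by
    intro γ P
    apply Quotient.sound
    have h : (PathConnectedSpace.somePath x₀ ((γ : X ≃ₜ X) x₀)).Homotopic P :=
      SimplyConnectedSpace.paths_homotopic _ _
    have h2 := h.map (f := ⟨κ Γ, kappa_continuous⟩)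
    exact homotopic_cast h2 rfl (kappa_apply_mem _ γ.2 x₀).symm
  have loop_trans : ∀ (a b : Γ) (Pa : Path x₀ ((a : X ≃ₜ X) x₀))
      (Pb : Path x₀ ((b : X ≃ₜ X) x₀)),
      loopOf (a*b).2 (Pa.trans (Pb.map (a : X ≃ₜ X).continuous)) =
        (loopOf a.2 Pa).trans (loopOf b.2 Pb) := by
    intro a b Pa Pb
    apply Path.ext
    funext t
    show κ Γ ((Pa.trans (Pb.map (a : X ≃ₜ X).continuous)) t) =
      ((loopOf a.2 Pa).trans (loopOf b.2 Pb)) t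
    rw [Path.trans_apply, Path.trans_apply]
    split_ifs with h
    · rfl
    · exact kappa_apply_mem _ a.2 _
  have ψ_mul : ∀ a b : Γ, ψ (a * b) = (ψ a).trans (ψ b) := by
    intro a b
    rw [ψ_eq (a*b) ((PathConnectedSpace.somePath x₀ ((a : X ≃ₜ X) x₀)).trans
      ((PathConnectedSpace.somePath x₀ ((b : X ≃ₜ X) x₀)).map (a : X ≃ₜ X).continuous)),
      loop_trans a b _ _, hψ]
    exact Path.Homotopic.Quotient.mk_trans _ _
  have ψ_one : ψ 1 = ⟦Path.refl (κ Γ x₀)⟧ := by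
    rw [ψ_eq 1 (Path.refl x₀)]
    have : loopOf (1 : Γ).2 (Path.refl x₀) = Path.refl (κ Γ x₀) := Path.ext rfl
    rw [this]
  -- packaging as a map into the fundamental group
  let Φ : Γ → FundamentalGroup (Quotient (orbitSetoid Γ)) (κ Γ x₀) := fun γ =>
    ψ γ⁻¹
  have Φhom : ∀ γ : Γ, Φ γ = ψ γ⁻¹ := fun γ => rfl
  set φm : Γ →* FundamentalGroup (Quotient (orbitSetoid Γ)) (κ Γ x₀) :=
    MonoidHom.mk' Φ (by
      intro a b
      show ψ ((a*b)⁻¹) = (ψ (b⁻¹)).trans (ψ (a⁻¹))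
      rw [← ψ_mul, mul_inv_rev]) with hφm
  have hbij : Function.Bijective φm := by
    constructor
    · rw [injective_iff_map_eq_one φm]
      intro γ hγ1
      have hhom : ψ γ⁻¹ = ⟦Path.refl (κ Γ x₀)⟧ := by
        have h1 : Φ γ = 1 := hγ1
        have h2 := h1
        rw [Φhom γ] at h2
        rw [h2]
        show CategoryTheory.CategoryStruct.id (FundamentalGroupoid.mk (κ Γ x₀)) = _
        rw [FundamentalGroupoid.id_eq_path_refl]
      set τ : X ≃ₜ X := ((γ⁻¹ : Γ) : X ≃ₜ X) with hτdef
      set P : Path x₀ (τ x₀) := PathConnectedSpace.somePath x₀ (τ x₀) with hPdef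
      have hhtp : (loopOf (γ⁻¹ : Γ).2 P).Homotopic (Path.refl (κ Γ x₀)) :=
        Path.Homotopic.Quotient.eq.mp ((ψ_eq γ⁻¹ P).symm.trans hhom)
      obtain ⟨F⟩ := hhtp
      set ℓ₀ := loopOf (γ⁻¹ : Γ).2 P with hℓ₀
      set K : ℝ × ℝ → Quotient (orbitSetoid Γ) := fun z =>
        F (Set.projIcc 0 1 zero_le_one z.1, Set.projIcc 0 1 zero_le_one z.2) with hKdef
      have hKc : Continuous K := F.continuous.comp
        ((continuous_projIcc.comp continuous_fst).prodMk
          (continuous_projIcc.comp continuous_snd))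
      have e0 : Set.projIcc (0:ℝ) 1 zero_le_one 0 = (0 : unitInterval) := by
        rw [Set.projIcc_left]; exact Subtype.ext rfl
      have e1 : Set.projIcc (0:ℝ) 1 zero_le_one 1 = (1 : unitInterval) := by
        rw [Set.projIcc_right]; exact Subtype.ext rfl
      have hK0 : ∀ s : ℝ, K (s, 0) = κ Γ x₀ := by
        intro s
        show F (_, Set.projIcc 0 1 zero_le_one 0) = κ Γ x₀
        rw [Set.projIcc_left]
        rw [F.eq_fst _ (by exact Or.inl rfl)]
        exact ℓ₀.source
      have hK1 : ∀ s : ℝ, K (s, 1) = κ Γ x₀ := by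
        intro s
        show F (_, Set.projIcc 0 1 zero_le_one 1) = κ Γ x₀
        rw [Set.projIcc_right]
        rw [F.eq_fst _ (by exact Or.inr rfl)]
        exact ℓ₀.target
      have hg0lift : ∀ t ∈ Icc (0:ℝ) 1, κ Γ (P.extend t) = K (0, t) := by
        intro t ht
        show κ Γ (P.extend t) =
          F (Set.projIcc 0 1 zero_le_one 0, Set.projIcc 0 1 zero_le_one t)
        rw [e0, Set.projIcc_of_mem zero_le_one ht, Path.extend_apply P ht]
        exact (F.apply_zero ⟨t, ht⟩).symm
      have hg1lift : ∀ t ∈ Icc (0:ℝ) 1, κ Γ ((fun _ => x₀) t) = K (1, t) := by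
        intro t ht
        show κ Γ x₀ =
          F (Set.projIcc 0 1 zero_le_one 1, Set.projIcc 0 1 zero_le_one t)
        rw [e1, Set.projIcc_of_mem zero_le_one ht]
        exact (F.apply_one ⟨t, ht⟩).symm
      have hend : P.extend 1 = x₀ :=
        monodromy hfree hpd K hKc x₀ x₀ hK0 hK1 P.extend (fun _ => x₀)
          P.continuous_extend continuous_const P.extend_zero rfl hg0lift hg1lift
      have hτ1 : τ = 1 := hfree τ (γ⁻¹ : Γ).2 x₀ (by
        rw [← Path.extend_one P]
        exact hend)
      have : (γ⁻¹ : Γ) = 1 := by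
        rw [← OneMemClass.coe_eq_one (S' := Γ)]
        exact hτ1
      exact inv_eq_one.1 this
    · intro F
      obtain ⟨ℓ, hℓ⟩ := Quotient.exists_rep (FundamentalGroup.toPath F)
      obtain ⟨g, hgc, hg0, hglift⟩ := lift_exists hfree hpd ℓ.continuous_extend
        (x := x₀) (ℓ.extend_zero)
      have hy : κ Γ (g 1) = κ Γ x₀ := by
        rw [hglift 1 ⟨zero_le_one, le_refl _⟩, Path.extend_one]
      obtain ⟨τ, hτ, hτy⟩ := kappa_eq_iff.1 hy
      refine ⟨⟨τ, hτ⟩, ?_⟩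
      show ψ (⟨τ, hτ⟩⁻¹ : Γ) = F
      have hyy : ((⟨τ, hτ⟩⁻¹ : Γ) : X ≃ₜ X) x₀ = g 1 := by
        show τ.symm x₀ = g 1
        rw [← hτy]
        exact τ.symm_apply_apply (g 1)
      set P' : Path x₀ (g 1) :=
        { toFun := fun t => g ↑t
          continuous_toFun := hgc.comp continuous_subtype_val
          source' := hg0
          target' := rfl } with hP'
      have hloopeq : loopOf (⟨τ, hτ⟩⁻¹ : Γ).2 (P'.cast rfl hyy) = ℓ := by
        apply Path.ext
        funext t
        show κ Γ (g ↑t) = ℓ t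
        rw [hglift ↑t t.2, Path.extend_apply ℓ t.2]
      rw [ψ_eq (⟨τ, hτ⟩⁻¹ : Γ) (P'.cast rfl hyy), hloopeq]
      exact hℓ
  exact ⟨(MulEquiv.ofBijective φm hbij).symm⟩

end OrbitCover

/-- Let `X` be a nonempty, simply connected, locally path-connected, locally compact
Hausdorff space and `Γ` a subgroup of the homeomorphism group of `X` acting freely and
properly discontinuously, with quotient map `κ : X → X/Γ`. Then for any `x₀ ∈ X` the
fundamental group of the orbit space `X/Γ` at the point `κ(x₀)` is isomorphic to `Γ`. -/
theorem fundamentalGroup_of_orbit_space {X : Type*} [TopologicalSpace X] [Nonempty X]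
    [SimplyConnectedSpace X] [LocallyPathConnectedSpace X] [LocallyCompactSpace X] [T2Space X]
    (Γ : Subgroup (X ≃ₜ X))
    (hfree : ∀ γ ∈ Γ, ∀ x : X, γ x = x → γ = 1)
    (hpd : ∀ K L : Set X, IsCompact K → IsCompact L →
      {γ : X ≃ₜ X | γ ∈ Γ ∧ ((⇑γ '' K) ∩ L).Nonempty}.Finite)
    (x₀ : X) :
    Nonempty (FundamentalGroup (Quotient (Homeomorph.orbitSetoid Γ))
        (Quotient.mk (Homeomorph.orbitSetoid Γ) x₀) ≃* Γ) := by
  exact OrbitCover.main_aux (Γ := Γ) hfree hpd x₀
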